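/- Let M₃ denote the five-element modular nondistributive lattice. If L is a finite lattice whose set of nonzero join-irreducible elements is the union of two chains, then M₃ is not a sublattice of L. -/
import Mathlib

/-- In a finite lattice, if `a ≰ m` then there is a sup-irreducible `x ≤ a`
with `x ≰ m`. -/
lemma exists_supIrred_le_not_le {L : Type*} [Lattice L] [Fintype L]
    {a m : L} (ha : ¬ a ≤ m) : ∃ x : L, SupIrred x ∧ x ≤ a ∧ ¬ x ≤ m := by
  induction a using WellFoundedLT.induction with
  | ind a ih =>
    by_cases hirr : SupIrred a
    · exact ⟨a, hirr, le_rfl, ha⟩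
    · rw [SupIrred] at hirr
      push_neg at hirr
      by_cases hmin : IsMin a
      · exact absurd (((hmin (inf_le_left (b := m))).antisymm inf_le_left ▸
          inf_le_right : a ≤ m)) ha
      · obtain ⟨b, c, hbc, hb, hc⟩ := hirr hmin
        have hblt : b < a := lt_of_le_of_ne (hbc ▸ le_sup_left) hb
        have hclt : c < a := lt_of_le_of_ne (hbc ▸ le_sup_right) hc
        by_cases hbm : b ≤ m
        · have hcm : ¬ c ≤ m := fun h => ha (hbc ▸ sup_le hbm h)
          obtain ⟨x, hx, hxc, hxm⟩ := ih c hclt hcm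
          exact ⟨x, hx, hxc.trans hclt.le, hxm⟩
        · obtain ⟨x, hx, hxb, hxm⟩ := ih b hblt hbm
          exact ⟨x, hx, hxb.trans hblt.le, hxm⟩

/-- If the set of (nonzero) join-irreducible elements of a finite
lattice `L` is the union of two chains, then `M₃` is not a sublattice of `L`. -/
theorem no_M3_of_join_irreducibles_union_two_chains {L : Type*} [Lattice L]
    [Fintype L]
    (C₁ C₂ : Set L) (h₁ : IsChain (· ≤ ·) C₁) (h₂ : IsChain (· ≤ ·) C₂)
    (hJ : {a : L | SupIrred a} = C₁ ∪ C₂) :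
    ¬ ∃ a b c : L, a ≠ b ∧ a ≠ c ∧ b ≠ c ∧
        a ⊓ b = a ⊓ c ∧ a ⊓ b = b ⊓ c ∧
        a ⊔ b = a ⊔ c ∧ a ⊔ b = b ⊔ c ∧
        a ⊓ b < a ∧ a ⊓ b < b ∧ a ⊓ b < c ∧
        a < a ⊔ b ∧ b < a ⊔ b ∧ c < a ⊔ b := by
  rintro ⟨a, b, c, hab, hac, hbc, hiac, hibc, _, _, hma, hmb, hmc, _, _, _⟩
  set m := a ⊓ b with hm
  obtain ⟨x, hx, hxa, hxm⟩ := exists_supIrred_le_not_le (not_le_of_gt hma)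
  obtain ⟨y, hy, hyb, hym⟩ := exists_supIrred_le_not_le (not_le_of_gt hmb)
  obtain ⟨z, hz, hzc, hzm⟩ := exists_supIrred_le_not_le (not_le_of_gt hmc)
  -- pairwise incomparable
  have hxy : ¬ (x ≤ y ∨ y ≤ x) := by
    rintro (h | h)
    · exact hxm (le_inf (hxa) (h.trans hyb))
    · exact hym (le_inf (h.trans hxa) hyb)
  have hxz : ¬ (x ≤ z ∨ z ≤ x) := by
    rintro (h | h)
    · exact hxm (hiac ▸ le_inf hxa (h.trans hzc))
    · exact hzm (hiac ▸ le_inf (h.trans hxa) hzc)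
  have hyz : ¬ (y ≤ z ∨ z ≤ y) := by
    rintro (h | h)
    · exact hym (hibc ▸ le_inf hyb (h.trans hzc))
    · exact hzm (hibc ▸ le_inf (h.trans hyb) hzc)
  have hx' : x ∈ C₁ ∪ C₂ := hJ ▸ hx
  have hy' : y ∈ C₁ ∪ C₂ := hJ ▸ hy
  have hz' : z ∈ C₁ ∪ C₂ := hJ ▸ hz
  have comp : ∀ (C : Set L), IsChain (· ≤ ·) C → ∀ u v : L, u ∈ C → v ∈ C →
      (u ≤ v ∨ v ≤ u) := by
    intro C hC u v hu hv
    rcases eq_or_ne u v with rfl | h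
    · exact Or.inl le_rfl
    · exact hC hu hv h
  rcases hx' with hx1 | hx2 <;> rcases hy' with hy1 | hy2 <;> rcases hz' with hz1 | hz2
  · exact hxy (comp C₁ h₁ x y hx1 hy1)
  · exact hxy (comp C₁ h₁ x y hx1 hy1)
  · exact hxz (comp C₁ h₁ x z hx1 hz1)
  · exact hyz (comp C₂ h₂ y z hy2 hz2)
  · exact hyz (comp C₁ h₁ y z hy1 hz1)
  · exact hxz (comp C₂ h₂ x z hx2 hz2)
  · exact hxy (comp C₂ h₂ x y hx2 hy2)
  · exact hxy (comp C₂ h₂ x y hx2 hy2)
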